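/- As n → ∞, σ_n · √(π n / 6) → 1; equivalently σ_n^{-1} ~ √(π n / 6). -/

import Mathlib

open MeasureTheory
open Real Filter Set

lemma sqrt_nat_atTop : Tendsto (fun n : ℕ => Real.sqrt n) atTop atTop := by
  have := (tendsto_rpow_atTop (by norm_num : (0:ℝ) < 1/2)).comp
    (tendsto_natCast_atTop_atTop (R := ℝ))
  refine this.congr fun n => ?_
  simp only [Function.comp, ← Real.sqrt_eq_rpow]

lemma sin_div_le {t : ℝ} (h0 : 0 < t) (h1 : t ≤ 1) :
    Real.sin t / t ≤ 1 - (11/96) * t^2 := by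
  have hb := Real.sin_bound (by rw [abs_of_pos h0]; exact h1)
  rw [abs_of_pos h0] at hb
  have h2 : Real.sin t ≤ t - t^3/6 + t^4 * (5/96) := by
    have := (abs_le.1 hb).2
    have h45 := pow_le_pow_of_le_one h0.le h1 (show 4 ≤ 5 by norm_num)
    have h4p := pow_pos h0 4
    linarith
  have h3 : t^4 ≤ t^3 := by nlinarith [pow_le_pow_of_le_one h0.le h1 (show 3 ≤ 4 by norm_num)]
  rw [div_le_iff₀ h0]; nlinarith

lemma sin_div_nonneg' {t : ℝ} (h0 : 0 < t) (h1 : t ≤ 1) : 0 ≤ Real.sin t / t :=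
  div_nonneg (Real.sin_nonneg_of_nonneg_of_le_pi h0.le (h1.trans (by linarith [Real.pi_gt_three]))) h0.le

-- |sin t / t| ≤ 85/96 for t ≥ 1
lemma abs_sin_div_le {t : ℝ} (ht : 1 ≤ t) : |Real.sin t / t| ≤ 85/96 := by
  have ht0 : 0 < t := lt_of_lt_of_le one_pos ht
  have key : |Real.sin t| ≤ (85/96) * t := by
    have hs1 : Real.sin 1 ≤ 85/96 := by
      have := (abs_le.1 (Real.sin_bound (x := 1) (by norm_num))).2; norm_num at this ⊢; linarith
    have hc1 : Real.cos 1 ≤ 85/96 := by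
      have := (abs_le.1 (Real.cos_bound (x := 1) (by norm_num))).2; norm_num at this ⊢; linarith
    rcases le_or_gt t 2 with h2 | h2
    · have hpos : 0 ≤ Real.sin t :=
        Real.sin_nonneg_of_nonneg_of_le_pi ht0.le (by linarith [Real.pi_gt_three])
      rw [abs_of_nonneg hpos]
      have : Real.sin t = Real.sin 1 * Real.cos (t-1) + Real.cos 1 * Real.sin (t-1) := by
        rw [← Real.sin_add]; ring_nf
      rw [this]
      have hcos : Real.cos (t-1) ≤ 1 := Real.cos_le_one _
      have hsin : Real.sin (t-1) ≤ t - 1 := Real.sin_le (by linarith)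
      have hc1' : (0:ℝ) ≤ Real.cos 1 := Real.cos_one_pos.le
      have hs1' : Real.sin 1 * Real.cos (t-1) ≤ Real.sin 1 :=
        mul_le_of_le_one_right (Real.sin_pos_of_pos_of_lt_pi one_pos (by linarith [Real.pi_gt_three])).le hcos
      nlinarith
    · calc |Real.sin t| ≤ 1 := Real.abs_sin_le_one t
        _ ≤ (85/96) * t := by nlinarith
  rw [abs_div, abs_of_pos ht0, div_le_iff₀ ht0]
  exact key

-- L1
lemma L1 : Tendsto (fun t : ℝ => (Real.sin t / t - 1) / t^2) (nhdsWithin 0 (Ioi 0))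
    (nhds (-(1/6))) := by
  have key : Tendsto (fun t : ℝ => (Real.sin t / t - 1) / t^2 - (-(1/6))) (nhdsWithin 0 (Ioi 0)) (nhds 0) := by
    apply squeeze_zero_norm' (a := fun t => (5/96) * t)
    · filter_upwards [Ioo_mem_nhdsGT_of_mem (by norm_num : (0:ℝ) ∈ Ico 0 1)] with t ht
      obtain ⟨h0, h1⟩ := ht
      have hb := Real.sin_bound (by rw [abs_of_pos h0]; exact h1.le)
      rw [abs_of_pos h0] at hb
      have ht2 : (0:ℝ) < t^2 := by positivity
      have ht3 : (0:ℝ) < t^3 := by positivity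
      have : (Real.sin t / t - 1) / t^2 - (-(1/6)) = (Real.sin t - (t - t^3/6)) / t^3 := by
        field_simp; ring
      rw [this, Real.norm_eq_abs, abs_div, abs_of_pos ht3, div_le_iff₀ ht3]
      calc |Real.sin t - (t - t^3/6)| ≤ t^5 / 100 := hb
        _ ≤ 5/96 * t * t^3 := by
          have h45 := pow_le_pow_of_le_one h0.le h1.le (show 4 ≤ 5 by norm_num)
          have h4p := pow_pos h0 4
          nlinarith
    · have : Tendsto (fun t : ℝ => (5/96) * t) (nhdsWithin 0 (Ioi 0)) (nhds ((5/96) * 0)) :=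
        (tendsto_const_nhds.mul Filter.tendsto_id).mono_left nhdsWithin_le_nhds
      simpa using this
  have := key.add_const (-(1/6))
  simpa using this

-- L2
lemma L2 : Tendsto (fun u : ℝ => Real.log (1 + u) / u) (nhdsWithin 0 {(0:ℝ)}ᶜ) (nhds 1) := by
  have h := Real.hasDerivAt_log one_ne_zero
  rw [hasDerivAt_iff_tendsto_slope] at h
  have hmap : Tendsto (fun u : ℝ => 1 + u) (nhdsWithin 0 {(0:ℝ)}ᶜ) (nhdsWithin 1 {(1:ℝ)}ᶜ) := by
    rw [tendsto_nhdsWithin_iff]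
    constructor
    · have : Tendsto (fun u : ℝ => 1 + u) (nhds 0) (nhds (1+0)) :=
        tendsto_const_nhds.add tendsto_id
      simpa using this.mono_left nhdsWithin_le_nhds
    · filter_upwards [self_mem_nhdsWithin] with u hu
      simp only [mem_compl_iff, mem_singleton_iff] at hu ⊢
      intro h; apply hu; linarith
  have := h.comp hmap
  simp only [inv_one] at this
  refine this.congr' ?_
  filter_upwards [self_mem_nhdsWithin] with u hu
  simp [slope, Function.comp, Real.log_one, div_eq_inv_mul]

-- L3
lemma L3 : Tendsto (fun t : ℝ => Real.log (Real.sin t / t) / t^2) (nhdsWithin 0 (Ioi 0))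
    (nhds (-(1/6))) := by
  set u : ℝ → ℝ := fun t => Real.sin t / t - 1 with hu
  have hune : ∀ t : ℝ, t ∈ Ioi (0:ℝ) → u t ≠ 0 := by
    intro t ht
    have : Real.sin t < t := Real.sin_lt ht
    have : Real.sin t / t < 1 := (div_lt_one ht).2 this
    simp only [hu]; intro h; rw [sub_eq_zero] at h; exact absurd h (ne_of_lt this)
  have hu0 : Tendsto u (nhdsWithin 0 (Ioi 0)) (nhdsWithin 0 {(0:ℝ)}ᶜ) := by
    rw [tendsto_nhdsWithin_iff]
    constructor
    · have h1 : Tendsto (fun t : ℝ => ((Real.sin t / t - 1) / t^2) * t^2) (nhdsWithin 0 (Ioi 0))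
          (nhds ((-(1/6)) * 0)) := by
        apply L1.mul
        have : Tendsto (fun t : ℝ => t^2) (nhds 0) (nhds (0^2 : ℝ)) :=
          (continuous_pow 2).tendsto 0
        simpa using this.mono_left nhdsWithin_le_nhds
      rw [mul_zero] at h1
      refine h1.congr' ?_
      filter_upwards [self_mem_nhdsWithin] with t ht
      have htne : (t:ℝ)^2 ≠ 0 := pow_ne_zero 2 (ne_of_gt ht)
      simp only [hu]
      rw [div_mul_cancel₀ _ htne]
    · filter_upwards [self_mem_nhdsWithin] with t ht
      exact hune t ht
  have hmul := (L2.comp hu0).mul L1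
  rw [one_mul] at hmul
  refine hmul.congr' ?_
  filter_upwards [self_mem_nhdsWithin] with t ht
  have htne : t ≠ 0 := ne_of_gt ht
  have huv : (1 : ℝ) + u t = Real.sin t / t := by simp [hu]
  simp only [Function.comp, huv]
  have h2 : Real.sin t / t - 1 = u t := rfl
  rw [h2, div_mul_div_comm, mul_comm (Real.log (Real.sin t / t)) (u t),
    mul_div_mul_left _ _ (hune t ht)]

lemma pointwise_lim {s : ℝ} (hs : 0 < s) :
    Tendsto (fun n : ℕ => (Real.sin (s / Real.sqrt n) / (s / Real.sqrt n)) ^ n) atTop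
      (nhds (Real.exp (-(1/6) * s^2))) := by
  have ht : Tendsto (fun n : ℕ => s / Real.sqrt n) atTop (nhdsWithin 0 (Ioi 0)) := by
    rw [tendsto_nhdsWithin_iff]
    constructor
    · have h1 : Tendsto (fun n : ℕ => s * (Real.sqrt n)⁻¹) atTop (nhds (s * 0)) :=
        tendsto_const_nhds.mul (tendsto_inv_atTop_zero.comp sqrt_nat_atTop)
      rw [mul_zero] at h1
      exact h1.congr fun n => (div_eq_mul_inv _ _).symm
    · filter_upwards [eventually_ge_atTop 1] with n hn
      have : (0:ℝ) < Real.sqrt n := Real.sqrt_pos.2 (by exact_mod_cast hn)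
      exact div_pos hs this
  have hA := L3.comp ht
  have hB : Tendsto (fun n : ℕ => s^2 * (Real.log (Real.sin (s / Real.sqrt n) / (s / Real.sqrt n)) / (s / Real.sqrt n)^2)) atTop (nhds (s^2 * (-(1/6)))) :=
    tendsto_const_nhds.mul hA
  have hC : Tendsto (fun n : ℕ => (n : ℝ) * Real.log (Real.sin (s / Real.sqrt n) / (s / Real.sqrt n))) atTop (nhds (-(1/6) * s^2)) := by
    have : s^2 * (-(1/6)) = -(1/6) * s^2 := by ring
    rw [this] at hB
    refine hB.congr' ?_
    filter_upwards [eventually_ge_atTop 1] with n hn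
    have hn0 : (0:ℝ) < (n:ℝ) := by exact_mod_cast hn
    have hsq : (s / Real.sqrt n)^2 = s^2 / n := by
      rw [div_pow, Real.sq_sqrt (Nat.cast_nonneg n)]
    rw [hsq]
    field_simp
  have hE := (Real.continuous_exp.tendsto _).comp hC
  refine hE.congr' ?_
  filter_upwards [ht.eventually (Ioo_mem_nhdsGT_of_mem (by norm_num : (0:ℝ) ∈ Ico 0 1))] with n hn
  obtain ⟨h0, h1⟩ := hn
  have hfpos : 0 < Real.sin (s / Real.sqrt n) / (s / Real.sqrt n) :=
    div_pos (Real.sin_pos_of_pos_of_le_one h0 h1.le) h0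
  simp only [Function.comp]
  rw [Real.exp_nat_mul, Real.exp_log hfpos]

lemma geom_const_bound {n : ℕ} (hn : 2 ≤ n) : ((85:ℝ)/96)^(n-2) * n ≤ 16 := by
  set m := n - 2 with hm
  have hb : 1 + (m:ℝ) * (11/85) ≤ (1 + 11/85)^m := one_add_mul_le_pow (by norm_num) m
  have hpos : (0:ℝ) < 1 + (m:ℝ) * (11/85) := by positivity
  have h85 : ((85:ℝ)/96)^m ≤ (1 + (m:ℝ)*(11/85))⁻¹ := by
    rw [show (85:ℝ)/96 = (1 + 11/85)⁻¹ by norm_num, inv_pow]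
    exact inv_anti₀ hpos hb
  have hn' : (n:ℝ) = (m:ℝ) + 2 := by
    have : n = m + 2 := by omega
    rw [this]; push_cast; ring
  have hm0 : (0:ℝ) ≤ (m:ℝ) := Nat.cast_nonneg m
  calc ((85:ℝ)/96)^m * n ≤ (1 + (m:ℝ)*(11/85))⁻¹ * ((m:ℝ) + 2) := by
        rw [hn']; exact mul_le_mul_of_nonneg_right h85 (by positivity)
    _ ≤ 16 := by rw [inv_mul_eq_div, div_le_iff₀ hpos]; linarith

lemma bound_le {n : ℕ} (hn : 2 ≤ n) {s : ℝ} (hs : 0 < s) :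
    |(Real.sin (s / Real.sqrt n) / (s / Real.sqrt n)) ^ n| ≤
      Real.exp (-(11/96) * s^2) + indicator (Ici 1) (fun s : ℝ => 16 / s^2) s := by
  have hn1 : (1:ℝ) ≤ Real.sqrt n := by
    rw [show (1:ℝ) = Real.sqrt 1 by simp]
    exact Real.sqrt_le_sqrt (by exact_mod_cast (by omega : 1 ≤ n))
  have hsn : (0:ℝ) < Real.sqrt n := lt_of_lt_of_le one_pos hn1
  set t := s / Real.sqrt n with htdef
  have ht0 : 0 < t := div_pos hs hsn
  have hnt : (n:ℝ) * t^2 = s^2 := by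
    rw [htdef, div_pow, Real.sq_sqrt (Nat.cast_nonneg n)]
    have : ((n:ℝ)) ≠ 0 := by positivity
    field_simp
  rw [abs_pow]
  rcases le_or_gt t 1 with h1 | h1
  · have hub := sin_div_le ht0 h1
    have hlb := sin_div_nonneg' ht0 h1
    have hpos : (0:ℝ) ≤ 1 - (11/96) * t^2 := le_trans hlb hub
    have h2 : |Real.sin t / t| ^ n ≤ (1 - (11/96)*t^2)^n := by
      rw [abs_of_nonneg hlb]; exact pow_le_pow_left₀ hlb hub n
    have h3 : (1 - (11/96)*t^2)^n ≤ Real.exp (-(11/96)*t^2) ^ n :=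
      pow_le_pow_left₀ hpos (by linarith [Real.add_one_le_exp (-(11/96)*t^2)]) n
    have h4 : Real.exp (-(11/96)*t^2) ^ n = Real.exp (-(11/96)*s^2) := by
      rw [← Real.exp_nat_mul, ← hnt]; ring_nf
    calc |Real.sin t / t| ^ n ≤ Real.exp (-(11/96)*s^2) := by
          rw [← h4]; exact le_trans h2 h3
      _ ≤ _ := le_add_of_nonneg_right (indicator_nonneg (fun x _ => by positivity) s)
  · have hsgt : Real.sqrt n < s := by rwa [htdef, lt_div_iff₀ hsn, one_mul] at h1
    have hs1 : 1 ≤ s := le_of_lt (lt_of_le_of_lt hn1 hsgt)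
    have hft : |Real.sin t / t| ≤ 85/96 := abs_sin_div_le h1.le
    have hft2 : |Real.sin t / t| ≤ 1/t := by
      rw [abs_div, abs_of_pos ht0]
      gcongr
      exact Real.abs_sin_le_one t
    have key : |Real.sin t / t|^n ≤ (85/96)^(n-2) * (1/t)^2 := by
      have hne : n = (n-2) + 2 := by omega
      calc |Real.sin t / t|^n = |Real.sin t / t|^(n-2) * |Real.sin t / t|^2 := by
            rw [← pow_add, ← hne]
        _ ≤ (85/96)^(n-2) * (1/t)^2 :=
            mul_le_mul (pow_le_pow_left₀ (abs_nonneg _) hft _)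
              (pow_le_pow_left₀ (abs_nonneg _) hft2 _) (by positivity) (by positivity)
    have h1t : (1/t)^2 = (n:ℝ) / s^2 := by
      have hs2 : s^2 ≠ 0 := by positivity
      have hnn : (n:ℝ) ≠ 0 := by positivity
      field_simp
      nlinarith [hnt]
    have hconst := geom_const_bound hn
    calc |Real.sin t / t| ^ n ≤ (85/96)^(n-2) * ((n:ℝ) / s^2) := by rw [← h1t]; exact key
      _ = ((85/96)^(n-2) * (n:ℝ)) / s^2 := by ring
      _ ≤ 16 / s^2 := by gcongr
      _ ≤ _ := by
          rw [indicator_of_mem (mem_Ici.2 hs1)]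
          exact le_add_of_nonneg_left (Real.exp_pos _).le

lemma dct_lim : Filter.Tendsto (fun n : ℕ => ∫ s in Ioi (0:ℝ),
      (Real.sin (s / Real.sqrt n) / (s / Real.sqrt n)) ^ n) atTop
    (nhds (Real.sqrt (π / (1/6)) / 2)) := by
  have hgauss : ∫ s in Ioi (0:ℝ), Real.exp (-(1/6) * s^2) = Real.sqrt (π/(1/6))/2 := by
    simpa using integral_gaussian_Ioi (1/6)
  rw [← hgauss]
  apply tendsto_integral_filter_of_dominated_convergence
    (bound := fun s => Real.exp (-(11/96) * s^2) + indicator (Ici 1) (fun s : ℝ => 16 / s^2) s)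
  · apply Eventually.of_forall
    intro n
    exact Measurable.aestronglyMeasurable
      (((Real.measurable_sin.comp (measurable_id.div_const _)).div
        (measurable_id.div_const _)).pow_const n)
  · filter_upwards [eventually_ge_atTop 2] with n hn
    rw [ae_restrict_iff' measurableSet_Ioi]
    exact ae_of_all _ fun s hs => by simpa only [Real.norm_eq_abs] using bound_le hn hs
  · apply Integrable.add
    · exact (integrable_exp_neg_mul_sq (by norm_num : (0:ℝ) < 11/96)).restrict
    · apply Integrable.restrict
      rw [integrable_indicator_iff measurableSet_Ici]
      rw [IntegrableOn, ← restrict_Ioi_eq_restrict_Ici]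
      have h : IntegrableOn (fun x : ℝ => 16 * x ^ (-2:ℝ)) (Ioi 1) :=
        (integrableOn_Ioi_rpow_of_lt (by norm_num : (-2:ℝ) < -1) zero_lt_one).const_mul 16
      refine (h.congr_fun ?_ measurableSet_Ioi)
      intro x hx
      have hx0 : 0 < x := lt_trans zero_lt_one hx
      simp only
      rw [show (-2:ℝ) = -(2:ℕ) by norm_num, Real.rpow_neg hx0.le, Real.rpow_natCast,
        div_eq_mul_inv]
  · rw [ae_restrict_iff' measurableSet_Ioi]
    exact ae_of_all _ fun s hs => pointwise_lim hs

noncomputable def sigma (n : ℕ) : ℝ :=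
  (2 / Real.pi) * ∫ t in Set.Ioi (0:ℝ), (Real.sin t / t) ^ n

theorem sigma_asymptotics :
    Filter.Tendsto (fun n : ℕ => sigma n * Real.sqrt (Real.pi * n / 6))
      Filter.atTop (nhds 1) := by
  have hπ : (0:ℝ) < π := Real.pi_pos
  set c : ℝ := (2/π) * Real.sqrt (π/6) with hcdef
  have hc : c * (Real.sqrt (π/(1/6))/2) = 1 := by
    rw [show π/(1/6) = 6*π by ring]
    have h1 : Real.sqrt (π/6) * Real.sqrt (6*π) = π := by
      rw [← Real.sqrt_mul (by positivity : (0:ℝ) ≤ π/6), show π/6*(6*π) = π^2 by ring,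
        Real.sqrt_sq hπ.le]
    rw [hcdef]
    rw [show 2/π * Real.sqrt (π/6) * (Real.sqrt (6*π)/2) = Real.sqrt (π/6) * Real.sqrt (6*π) / π by ring,
      h1, div_self hπ.ne']
  have hmain := dct_lim.const_mul c
  rw [hc] at hmain
  refine hmain.congr' ?_
  filter_upwards [eventually_ge_atTop 1] with n hn
  have hn0 : (0:ℝ) < (n:ℝ) := by exact_mod_cast hn
  have hsn : (0:ℝ) < Real.sqrt n := Real.sqrt_pos.2 hn0
  have hsub : (∫ s in Ioi (0:ℝ), (Real.sin (s / Real.sqrt n) / (s / Real.sqrt n)) ^ n)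
      = Real.sqrt n * ∫ t in Ioi (0:ℝ), (Real.sin t / t)^n := by
    have h := integral_comp_mul_left_Ioi (fun t : ℝ => (Real.sin t / t)^n) 0
      (show (0:ℝ) < (Real.sqrt n)⁻¹ from inv_pos.2 hsn)
    simp only [mul_zero, inv_inv, smul_eq_mul] at h
    simp_rw [inv_mul_eq_div] at h
    exact h
  have hsqrt : Real.sqrt (π * n / 6) = Real.sqrt (π/6) * Real.sqrt n := by
    rw [← Real.sqrt_mul (by positivity : (0:ℝ) ≤ π/6)]
    congr 1
    ring
  rw [hsub, sigma, hsqrt, hcdef]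
  ring
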